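/- For every integer matrix M, every prime p, and every natural number r ≥ 1, tr(M^{p^r}) ≡ tr(M^{p^{r-1}}) (mod p^r). -/

import Mathlib

set_option linter.unusedSectionVars false

namespace ET
variable {n : ℕ}

/-! ### Rotation of cyclic walks -/

def rot {N : ℕ} (c : ZMod N) (w : ZMod N → Fin n) : ZMod N → Fin n := fun i => w (i + c)

lemma rot_rot {N : ℕ} (c d : ZMod N) (w : ZMod N → Fin n) :
    rot c (rot d w) = rot (c + d) w := by
  funext i; simp [rot, add_assoc]

lemma rot_zero {N : ℕ} (w : ZMod N → Fin n) : rot 0 w = w := by funext i; simp [rot]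

lemma rot_nsmul_fixed {N : ℕ} (d : ZMod N) (w : ZMod N → Fin n) (h : rot d w = w) (k : ℕ) :
    rot (k • d) w = w := by
  induction k with
  | zero => simpa using rot_zero w
  | succ k ih => rw [succ_nsmul, ← rot_rot, h, ih]

lemma rot_mul_fixed {N : ℕ} [NeZero N] (c d : ZMod N) (w : ZMod N → Fin n) (h : rot d w = w) :
    rot (c * d) w = w := by
  have : c * d = c.val • d := by
    rw [nsmul_eq_mul]; congr 1; exact (ZMod.natCast_rightInverse c).symm
  rw [this]; exact rot_nsmul_fixed d w h c.val

/-! ### Bezout lemma in `ZMod (p^t)` -/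

lemma exists_mul_eq_pow {p t : ℕ} (hp : p.Prime) (ht : 1 ≤ t) (d : ZMod (p^t)) (hd : d ≠ 0) :
    ∃ c : ZMod (p^t), c * d = ((p^(t-1) : ℕ) : ZMod (p^t)) := by
  have hN : NeZero (p^t) := ⟨pow_ne_zero t hp.pos.ne'⟩
  set a := d.val with ha
  have ha0 : a ≠ 0 := fun h => hd (by rwa [← ZMod.val_eq_zero])
  set g := Nat.gcd a (p^t) with hg
  obtain ⟨v, hv, hgv⟩ := (Nat.dvd_prime_pow hp).mp (Nat.gcd_dvd_right a (p^t))
  have hvlt : v ≤ t - 1 := by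
    by_contra hlt
    have hvt : v = t := le_antisymm hv (by omega)
    have hdvd : p^t ∣ a := by
      have := Nat.gcd_dvd_left a (p^t); rwa [hgv, hvt] at this
    have := Nat.le_of_dvd (Nat.pos_of_ne_zero ha0) hdvd
    have := ZMod.val_lt d
    omega
  have hgd : g ∣ p^(t-1) := by
    have := pow_dvd_pow p hvlt; rwa [← hgv] at this
  obtain ⟨k, hk⟩ := hgd
  have hbez : (g : ℤ) = (a : ℤ) * Nat.gcdA a (p^t) + ((p^t : ℕ) : ℤ) * Nat.gcdB a (p^t) :=
    Nat.gcd_eq_gcd_ab a (p^t)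
  set A : ZMod (p^t) := ((Nat.gcdA a (p^t) : ℤ) : ZMod (p^t)) with hA
  refine ⟨(k : ZMod (p^t)) * A, ?_⟩
  have hda : ((a : ℕ) : ZMod (p^t)) = d := ZMod.natCast_rightInverse d
  have hgz : ((g : ℕ) : ZMod (p^t)) = d * A := by
    have h2 := congrArg (fun z : ℤ => ((z : ℤ) : ZMod (p^t))) hbez
    simp only [Int.cast_add, Int.cast_mul, Int.cast_natCast] at h2
    rw [ZMod.natCast_self] at h2
    rw [hda] at h2
    simpa [hA] using h2
  calc (k : ZMod (p^t)) * A * d = (k : ZMod (p^t)) * (d * A) := by ring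
    _ = (k : ZMod (p^t)) * ((g : ℕ) : ZMod (p^t)) := by rw [hgz]
    _ = ((g * k : ℕ) : ZMod (p^t)) := by push_cast; ring
    _ = ((p^(t-1) : ℕ) : ZMod (p^t)) := by rw [← hk]

/-! ### Orbit-sum divisibility -/

lemma orbit_sum {N : ℕ} [NeZero N] (e : ZMod N)
    (he : ∀ d : ZMod N, d ≠ 0 → ∃ c : ZMod N, c * d = e)
    (F : (ZMod N → Fin n) → ℤ) (hF : ∀ c w, F (rot c w) = F w) (d : ℤ)
    (T : Finset (ZMod N → Fin n))
    (hT : ∀ c w, w ∈ T → rot c w ∈ T)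
    (hfree : ∀ w ∈ T, rot e w ≠ w)
    (hd : ∀ w ∈ T, d ∣ F w) :
    ((N : ℤ) * d) ∣ ∑ w ∈ T, F w := by
  classical
  generalize hcard : T.card = K
  induction K using Nat.strong_induction_on generalizing T hT hfree hd with
  | _ K ih =>
  rcases Finset.eq_empty_or_nonempty T with rfl | ⟨w₀, hw₀⟩
  · simp
  have hfree' : ∀ w ∈ T, ∀ c : ZMod N, rot c w = w → c = 0 := by
    intro w hw c hc
    by_contra hc0
    obtain ⟨c', hc'⟩ := he c hc0
    exact hfree w hw (by rw [← hc']; exact rot_mul_fixed c' c w hc)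
  set O : Finset (ZMod N → Fin n) := Finset.image (fun c => rot c w₀) Finset.univ with hO
  have hinj : Function.Injective (fun c : ZMod N => rot c w₀) := by
    intro c c' hcc
    have h1 : rot (-c' + c) w₀ = w₀ := by
      have := congrArg (rot (-c')) hcc
      rw [rot_rot, rot_rot, neg_add_cancel, rot_zero] at this
      exact this
    have h2 := hfree' w₀ hw₀ _ h1
    exact (neg_add_eq_zero.mp h2).symm
  have hOsub : O ⊆ T := by
    intro w hw
    simp only [hO, Finset.mem_image] at hw
    obtain ⟨c, _, rfl⟩ := hw
    exact hT c w₀ hw₀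
  have hcardO : O.card = N := by
    rw [hO, Finset.card_image_of_injective _ hinj, Finset.card_univ, ZMod.card]
  have hsumO : ∑ w ∈ O, F w = (N : ℤ) * F w₀ := by
    have hc : ∀ w ∈ O, F w = F w₀ := by
      intro w hw; simp only [hO, Finset.mem_image] at hw
      obtain ⟨c, _, rfl⟩ := hw; exact hF c w₀
    rw [Finset.sum_congr rfl hc, Finset.sum_const, hcardO, nsmul_eq_mul]
  rw [← Finset.sum_sdiff hOsub]
  apply dvd_add
  · have hNpos : 0 < N := Nat.pos_of_ne_zero (NeZero.ne N)
    have hle : O.card ≤ T.card := Finset.card_le_card hOsub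
    refine ih (T \ O).card ?_ (T \ O) ?_ ?_ ?_ rfl
    · rw [Finset.card_sdiff_of_subset hOsub]
      omega
    · intro c w hw
      rw [Finset.mem_sdiff] at hw ⊢
      refine ⟨hT c w hw.1, ?_⟩
      intro hmem
      apply hw.2
      simp only [hO, Finset.mem_image] at hmem ⊢
      obtain ⟨c', _, hc'⟩ := hmem
      refine ⟨-c + c', Finset.mem_univ _, ?_⟩
      have h3 := congrArg (rot (-c)) hc'
      rw [rot_rot, rot_rot, neg_add_cancel, rot_zero] at h3
      exact h3
    · intro w hw; exact hfree w (Finset.mem_sdiff.mp hw).1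
    · intro w hw; exact hd w (Finset.mem_sdiff.mp hw).1
  · rw [hsumO]; exact mul_dvd_mul_left _ (hd w₀ hw₀)

/-! ### Trace of a power as a sum over cyclic walks -/

variable (M : Matrix (Fin n) (Fin n) ℤ)

def wprod : {m : ℕ} → (Fin (m+1) → Fin n) → ℤ :=
  fun {m} q => ∏ i : Fin m, M (q i.castSucc) (q i.succ)

theorem wprod_snoc (m : ℕ) (a b j : Fin n) (w : Fin m → Fin n) :
    wprod M (Fin.cons a (Fin.snoc (Fin.snoc w j) b)) = wprod M (Fin.cons a (Fin.snoc w j)) * M j b := by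
  rw [Fin.cons_snoc_eq_snoc_cons]
  unfold wprod
  rw [Fin.prod_univ_castSucc]
  congr 1
  · apply Finset.prod_congr rfl
    intro i _
    rw [Fin.succ_castSucc, Fin.snoc_castSucc, Fin.snoc_castSucc]
  · rw [Fin.succ_last, Fin.snoc_last, Fin.cons_snoc_eq_snoc_cons, Fin.snoc_castSucc, Fin.snoc_last]

theorem pow_entry (m : ℕ) (a b : Fin n) :
    (M ^ (m+1)) a b = ∑ w : Fin m → Fin n, wprod M (Fin.cons a (Fin.snoc w b)) := by
  induction m generalizing b with
  | zero => simp [wprod, pow_one, Fin.snoc]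
  | succ m ih =>
    rw [pow_succ, Matrix.mul_apply]
    have h1 : ∀ j, (M^(m+1)) a j * M j b
        = ∑ w : Fin m → Fin n, wprod M (Fin.cons a (Fin.snoc (Fin.snoc w j) b)) := by
      intro j; rw [ih, Finset.sum_mul]
      exact Finset.sum_congr rfl fun w _ => (wprod_snoc M m a b j w).symm
    simp only [h1]
    rw [← Fintype.sum_prod_type']
    apply Fintype.sum_equiv (Fin.snocEquiv (fun _ => Fin n))
    intro x
    obtain ⟨j, w⟩ := x
    rfl

def cval {N : ℕ} [NeZero N] (w : ZMod N → Fin n) : ℤ := ∏ i : ZMod N, M (w i) (w (i+1))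

lemma cval_eq_wprod (m : ℕ) (v : Fin (m+1) → Fin n) :
    cval (N := m+1) M v = wprod M (Fin.snoc v (v 0)) := by
  unfold cval wprod
  apply Finset.prod_congr rfl
  intro i _
  erw [Fin.snoc_castSucc]
  congr 1
  rcases eq_or_ne i (Fin.last m) with h | h
  · subst h
    show v ((Fin.last m : Fin (m+1)) + 1) = _
    rw [Fin.last_add_one, Fin.succ_last, Fin.snoc_last]
  · obtain ⟨j, rfl⟩ := Fin.exists_castSucc_eq.mpr h
    show v ((Fin.castSucc j : Fin (m+1)) + 1) = _
    rw [Fin.coeSucc_eq_succ, Fin.succ_castSucc, Fin.snoc_castSucc]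

theorem trace_pow (m : ℕ) :
    (M ^ (m+1)).trace = ∑ w : ZMod (m+1) → Fin n, cval M w := by
  calc (M ^ (m+1)).trace
      = ∑ a : Fin n, ∑ w : Fin m → Fin n, wprod M (Fin.cons a (Fin.snoc w a)) := by
        rw [Matrix.trace]
        exact Finset.sum_congr rfl fun a _ => pow_entry M m a a
    _ = ∑ x : (Fin n) × (Fin m → Fin n), wprod M (Fin.cons x.1 (Fin.snoc x.2 x.1)) := by
        rw [Fintype.sum_prod_type]
    _ = ∑ v : ZMod (m+1) → Fin n, cval M v := by
        apply Fintype.sum_equiv (Fin.consEquiv (fun _ => Fin n))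
        intro x
        obtain ⟨a, w⟩ := x
        have : wprod M (Fin.cons a (Fin.snoc w a))
            = cval (N := m+1) M ((Fin.cons a w : Fin (m+1) → Fin n)) := by
          rw [cval_eq_wprod, Fin.cons_zero, Fin.cons_snoc_eq_snoc_cons]
        exact this

theorem trace_pow' (N : ℕ) [NeZero N] :
    (M ^ N).trace = ∑ w : ZMod N → Fin n, cval M w := by
  obtain ⟨m, rfl⟩ : ∃ m, N = m+1 := ⟨N-1, by have := NeZero.ne N; omega⟩
  exact trace_pow M m

lemma cval_rot {N : ℕ} [NeZero N] (c : ZMod N) (w : ZMod N → Fin n) :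
    cval M (rot c w) = cval M w := by
  unfold cval rot
  apply Fintype.prod_equiv (Equiv.addRight c)
  intro i
  simp only [Equiv.coe_addRight]
  have h : i + 1 + c = i + c + 1 := by ring
  rw [h]

/-! ### Casting between walk lengths -/

variable (p : ℕ) [Fact p.Prime]

def cst {s t : ℕ} (h : s ≤ t) : ZMod (p^t) → ZMod (p^s) :=
  ZMod.castHom (pow_dvd_pow p h) (ZMod (p^s))

def rep {s t : ℕ} (h : s ≤ t) (u : ZMod (p^s) → Fin n) : ZMod (p^t) → Fin n :=
  fun i => u (cst p h i)

lemma cst_natCast {s t : ℕ} (h : s ≤ t) (a : ℕ) :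
    cst p h ((a : ℕ) : ZMod (p^t)) = (a : ZMod (p^s)) := map_natCast _ a

lemma cst_add {s t : ℕ} (h : s ≤ t) (i j : ZMod (p^t)) :
    cst p h (i + j) = cst p h i + cst p h j := map_add _ i j

lemma cst_one {s t : ℕ} (h : s ≤ t) : cst p h 1 = 1 := map_one _

lemma cst_cst {s t' t : ℕ} (h1 : s ≤ t') (h2 : t' ≤ t) (i : ZMod (p^t)) :
    cst p h1 (cst p h2 i) = cst p (h1.trans h2) i := by
  rw [show i = ((i.val : ℕ) : ZMod (p^t)) from (ZMod.natCast_rightInverse i).symm,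
    cst_natCast, cst_natCast, cst_natCast]

lemma cst_refl {t : ℕ} (i : ZMod (p^t)) : cst p (le_refl t) i = i := by
  rw [show i = ((i.val : ℕ) : ZMod (p^t)) from (ZMod.natCast_rightInverse i).symm, cst_natCast]

lemma cst_surjective {s t : ℕ} (h : s ≤ t) : Function.Surjective (cst p h) := by
  intro j
  exact ⟨((j.val : ℕ) : ZMod (p^t)), by rw [cst_natCast]; exact ZMod.natCast_rightInverse j⟩

lemma rep_refl {t : ℕ} (u : ZMod (p^t) → Fin n) : rep p (le_refl t) u = u := by
  funext i; simp [rep, cst_refl]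

lemma rep_rep {s t' t : ℕ} (h1 : s ≤ t') (h2 : t' ≤ t) (u : ZMod (p^s) → Fin n) :
    rep p h2 (rep p h1 u) = rep p (h1.trans h2) u := by
  funext i; simp [rep, cst_cst]

lemma rot_rep {s t : ℕ} (h : s ≤ t) (c : ZMod (p^t)) (u : ZMod (p^s) → Fin n) :
    rot c (rep p h u) = rep p h (rot (cst p h c) u) := by
  funext i; simp [rot, rep, cst_add]

lemma rot_e_rep {t : ℕ} (u : ZMod (p^t) → Fin n) :
    rot ((p^t : ℕ) : ZMod (p^(t+1))) (rep p (Nat.le_succ t) u) = rep p (Nat.le_succ t) u := by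
  rw [rot_rep]
  have h : cst p (Nat.le_succ t) ((p^t : ℕ) : ZMod (p^(t+1))) = ((p^t : ℕ) : ZMod (p^t)) :=
    cst_natCast p _ _
  rw [h, ZMod.natCast_self, rot_zero]

lemma fixed_eq_rep {t : ℕ} (w : ZMod (p^(t+1)) → Fin n)
    (hw : rot ((p^t : ℕ) : ZMod (p^(t+1))) w = w) :
    ∃ u : ZMod (p^t) → Fin n, w = rep p (Nat.le_succ t) u := by
  refine ⟨fun j => w ((j.val : ℕ) : ZMod (p^(t+1))), ?_⟩
  funext i
  show w i = w (((cst p (Nat.le_succ t) i).val : ℕ) : ZMod (p^(t+1)))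
  have hcv : (cst p (Nat.le_succ t) i).val = i.val % p^t := by
    rw [show i = ((i.val : ℕ) : ZMod (p^(t+1))) from (ZMod.natCast_rightInverse i).symm,
      cst_natCast, ZMod.val_natCast]
    rw [ZMod.val_natCast]
    congr 1
    exact (Nat.mod_eq_of_lt (ZMod.val_lt i)).symm
  rw [hcv]
  have hdecomp : i = ((i.val % p^t : ℕ) : ZMod (p^(t+1)))
      + (i.val / p^t) • ((p^t : ℕ) : ZMod (p^(t+1))) := by
    symm
    rw [nsmul_eq_mul, ← Nat.cast_mul, ← Nat.cast_add, Nat.mod_add_div']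
    exact ZMod.natCast_rightInverse i
  have hfix := rot_nsmul_fixed _ w hw (i.val / p^t)
  conv_lhs => rw [hdecomp]
  exact congrFun hfix ((i.val % p^t : ℕ) : ZMod (p^(t+1)))

lemma rep_injective {s t : ℕ} (h : s ≤ t) : Function.Injective (rep (n := n) p h) := by
  intro u u' huu
  funext j
  obtain ⟨i, rfl⟩ := cst_surjective p h j
  exact congrFun huu i

/-! ### Fiber product -/

lemma prod_cst {t : ℕ} (g : ZMod (p^t) → ℤ) :
    ∏ i : ZMod (p^(t+1)), g (cst p (Nat.le_succ t) i) = (∏ j : ZMod (p^t), g j)^p := by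
  have hp := (Fact.out : p.Prime)
  set f : ZMod (p^t) × Fin p → ZMod (p^(t+1)) :=
    fun x => ((x.1.val + x.2.val * p^t : ℕ) : ZMod (p^(t+1))) with hf
  have hval : ∀ x, (f x).val = x.1.val + x.2.val * p^t := by
    intro x
    rw [hf]
    simp only []
    rw [ZMod.val_natCast]
    apply Nat.mod_eq_of_lt
    have h1 : x.1.val < p^t := ZMod.val_lt x.1
    have h2 : x.2.val < p := x.2.isLt
    calc x.1.val + x.2.val * p^t < p^t + x.2.val * p^t := by omega
      _ ≤ p^t + (p-1) * p^t := by
          have : x.2.val ≤ p - 1 := by omega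
          exact Nat.add_le_add_left (Nat.mul_le_mul_right _ this) _
      _ = p * p^t := by
          have hp1 : 1 + (p - 1) = p := by
            have := hp.one_lt; omega
          calc p^t + (p-1) * p^t = (1 + (p-1)) * p^t := by ring
            _ = p * p^t := by rw [hp1]
      _ = p^(t+1) := by ring
  have hinj : Function.Injective f := by
    intro x y hxy
    have := congrArg ZMod.val hxy
    rw [hval, hval] at this
    have h1 : x.1.val = y.1.val := by
      have e1 := congrArg (· % p^t) this
      simpa [Nat.add_mul_mod_self_right, Nat.mod_eq_of_lt (ZMod.val_lt x.1),
        Nat.mod_eq_of_lt (ZMod.val_lt y.1)] using e1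
    have hpt : 0 < p^t := pow_pos hp.pos t
    have h2 : x.2.val = y.2.val := by
      have : x.2.val * p^t = y.2.val * p^t := by omega
      exact Nat.eq_of_mul_eq_mul_right hpt this
    exact Prod.ext (ZMod.val_injective _ h1) (Fin.ext h2)
  have hbij : Function.Bijective f := by
    rw [Fintype.bijective_iff_injective_and_card]
    refine ⟨hinj, ?_⟩
    rw [Fintype.card_prod, ZMod.card, ZMod.card, Fintype.card_fin, ← pow_succ]
  have hcstf : ∀ x, cst p (Nat.le_succ t) (f x) = x.1 := by
    intro x
    rw [hf]
    simp only []
    rw [cst_natCast, Nat.cast_add, Nat.cast_mul, ZMod.natCast_self, mul_zero, add_zero]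
    exact ZMod.natCast_rightInverse x.1
  calc ∏ i : ZMod (p^(t+1)), g (cst p (Nat.le_succ t) i)
      = ∏ x : ZMod (p^t) × Fin p, g (cst p (Nat.le_succ t) (f x)) :=
        (Fintype.prod_bijective f hbij _ _ (fun x => rfl)).symm
    _ = ∏ x : ZMod (p^t) × Fin p, g x.1 := by
        apply Finset.prod_congr rfl; intro x _; rw [hcstf]
    _ = ∏ j : ZMod (p^t), ∏ _k : Fin p, g j := Fintype.prod_prod_type _
    _ = ∏ j : ZMod (p^t), (g j)^p := by
        apply Finset.prod_congr rfl; intro j _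
        rw [Finset.prod_const, Finset.card_univ, Fintype.card_fin]
    _ = (∏ j : ZMod (p^t), g j)^p := by rw [Finset.prod_pow]

lemma cval_rep_one {t : ℕ} (u : ZMod (p^t) → Fin n) :
    cval M (rep p (Nat.le_succ t) u) = (cval M u)^p := by
  unfold cval
  have h : ∀ i : ZMod (p^(t+1)),
      M (rep p (Nat.le_succ t) u i) (rep p (Nat.le_succ t) u (i+1))
      = M (u (cst p (Nat.le_succ t) i)) (u (cst p (Nat.le_succ t) i + 1)) := by
    intro i
    unfold rep
    rw [cst_add, cst_one]
  rw [Finset.prod_congr rfl (fun i _ => h i)]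
  exact prod_cst p (fun j => M (u j) (u (j+1)))

lemma cval_rep {s t : ℕ} (h : s ≤ t) (u : ZMod (p^s) → Fin n) :
    cval M (rep p h u) = (cval M u)^(p^(t-s)) := by
  induction t, h using Nat.le_induction with
  | base => rw [rep_refl, Nat.sub_self, pow_zero, pow_one]
  | succ t h ih =>
    rw [← rep_rep p h (Nat.le_succ t), cval_rep_one, ih, ← pow_mul, ← pow_succ,
      Nat.succ_sub h]

/-! ### Sum over fixed walks -/

lemma sum_fixed {t : ℕ} (G : (ZMod (p^(t+1)) → Fin n) → ℤ) :
    ∑ w ∈ Finset.univ.filter (fun w => rot ((p^t : ℕ) : ZMod (p^(t+1))) w = w), G w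
      = ∑ u : ZMod (p^t) → Fin n, G (rep p (Nat.le_succ t) u) := by
  symm
  apply Finset.sum_bij (fun u _ => rep p (Nat.le_succ t) u)
  · intro u _
    rw [Finset.mem_filter]
    exact ⟨Finset.mem_univ _, rot_e_rep p u⟩
  · intro u _ u' _ huu
    exact rep_injective p _ huu
  · intro w hw
    rw [Finset.mem_filter] at hw
    obtain ⟨u, rfl⟩ := fixed_eq_rep p w hw.2
    exact ⟨u, Finset.mem_univ _, rfl⟩
  · intro u _
    rfl

/-! ### Key divisibility lemma -/

lemma keyB : ∀ t k : ℕ, t ≤ k → ∀ G : (ZMod (p^t) → Fin n) → ℤ,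
    (∀ c w, G (rot c w) = G w) →
    (∀ s (hs : s ≤ t) (v : ZMod (p^s) → Fin n), (p : ℤ)^(k-s) ∣ G (rep p hs v)) →
    (p : ℤ)^k ∣ ∑ w : ZMod (p^t) → Fin n, G w := by
  intro t
  induction t with
  | zero =>
    intro k hk G hG hdvd
    apply Finset.dvd_sum
    intro w _
    have h := hdvd 0 (le_refl 0) w
    rw [rep_refl] at h
    simpa using h
  | succ t ih =>
    intro k hk G hG hdvd
    have hp := (Fact.out : p.Prime)
    set e : ZMod (p^(t+1)) := ((p^t : ℕ) : ZMod (p^(t+1))) with he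
    rw [← Finset.sum_filter_add_sum_filter_not Finset.univ (fun w => rot e w = w)]
    apply dvd_add
    · rw [sum_fixed p]
      apply ih k (by omega)
      · intro c u
        obtain ⟨c', rfl⟩ := cst_surjective p (Nat.le_succ t) c
        rw [← rot_rep, hG]
      · intro s hs v
        rw [rep_rep]
        exact hdvd s (hs.trans (Nat.le_succ t)) v
    · have horb := orbit_sum e
        (fun d hd => by
          exact exists_mul_eq_pow hp (by omega : 1 ≤ t+1) d hd)
        G hG ((p : ℤ)^(k-(t+1)))
        (Finset.univ.filter (fun w => ¬ rot e w = w))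
        (by
          intro c w hw
          rw [Finset.mem_filter] at hw ⊢
          refine ⟨Finset.mem_univ _, ?_⟩
          intro hfix
          apply hw.2
          have h3 := congrArg (rot (-c)) hfix
          rw [rot_rot, rot_rot, rot_rot, neg_add_cancel, rot_zero,
            show -c + e + c = e by ring] at h3
          exact h3)
        (fun w hw => (Finset.mem_filter.mp hw).2)
        (by
          intro w _
          have h := hdvd (t+1) (le_refl (t+1)) w
          rw [rep_refl] at h
          exact h)
      have heq : ((p^(t+1) : ℕ) : ℤ) * (p : ℤ)^(k-(t+1)) = (p : ℤ)^k := by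
        push_cast
        rw [← pow_add]
        congr 1
        omega
      rw [heq] at horb
      exact horb

end ET

open ET

theorem euler_congruence_trace (n : ℕ) (M : Matrix (Fin n) (Fin n) ℤ)
    (p : ℕ) (hp : p.Prime) (r : ℕ) (hr : 1 ≤ r) :
    (M ^ (p ^ r)).trace ≡ (M ^ (p ^ (r - 1))).trace [ZMOD (p ^ r)] := by
  haveI := Fact.mk hp
  obtain ⟨t, rfl⟩ : ∃ t, r = t + 1 := ⟨r - 1, by omega⟩
  simp only [Nat.add_sub_cancel]
  rw [trace_pow' M (p^(t+1)), trace_pow' M (p^t)]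
  rw [Int.modEq_iff_dvd]
  set e : ZMod (p^(t+1)) := ((p^t : ℕ) : ZMod (p^(t+1))) with he
  -- step 1 : the moving part
  have h1 : (p : ℤ)^(t+1) ∣ (∑ w : ZMod (p^(t+1)) → Fin n, cval M w)
      - ∑ u : ZMod (p^t) → Fin n, (cval M u)^p := by
    have hsplit := Finset.sum_filter_add_sum_filter_not Finset.univ
      (fun w => rot e w = w) (cval M)
    have hfixsum : ∑ w ∈ Finset.univ.filter (fun w => rot e w = w), cval M w
        = ∑ u : ZMod (p^t) → Fin n, (cval M u)^p := by
      rw [sum_fixed p (cval M)]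
      exact Finset.sum_congr rfl fun u _ => cval_rep_one M p u
    have horb := orbit_sum e
      (fun d hd => by
        exact exists_mul_eq_pow hp (by omega : 1 ≤ t+1) d hd)
      (cval M) (fun c w => cval_rot M c w) 1
      (Finset.univ.filter (fun w => ¬ rot e w = w))
      (by
        intro c w hw
        rw [Finset.mem_filter] at hw ⊢
        refine ⟨Finset.mem_univ _, ?_⟩
        intro hfix
        apply hw.2
        have h3 := congrArg (rot (-c)) hfix
        rw [rot_rot, rot_rot, rot_rot, neg_add_cancel, rot_zero,
          show -c + e + c = e by ring] at h3
        exact h3)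
      (fun w hw => (Finset.mem_filter.mp hw).2)
      (fun w _ => one_dvd _)
    rw [mul_one] at horb
    have : (∑ w : ZMod (p^(t+1)) → Fin n, cval M w)
        - ∑ u : ZMod (p^t) → Fin n, (cval M u)^p
        = ∑ w ∈ Finset.univ.filter (fun w => ¬ rot e w = w), cval M w := by
      rw [← hsplit, hfixsum]; ring
    rw [this]
    have hcast : ((p^(t+1) : ℕ) : ℤ) = (p:ℤ)^(t+1) := by push_cast; ring
    rw [← hcast]
    exact horb
  -- step 2 : Fermat lifting
  have h2 : (p : ℤ)^(t+1) ∣ ∑ u : ZMod (p^t) → Fin n, ((cval M u)^p - cval M u) := by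
    apply keyB p t (t+1) (Nat.le_succ t)
    · intro c w
      rw [cval_rot]
    · intro s hs v
      rw [cval_rep M p hs]
      have hfermat : (p : ℤ) ∣ (cval M v)^p - cval M v := by
        have : (((cval M v)^p - cval M v : ℤ) : ZMod p) = 0 := by
          push_cast [ZMod.pow_card]; ring
        exact (ZMod.intCast_zmod_eq_zero_iff_dvd _ _).mp this
      have hkey := dvd_sub_pow_of_dvd_sub hfermat (t - s)
      have hrw : ((cval M v)^(p^(t-s)))^p - (cval M v)^(p^(t-s))
          = ((cval M v)^p)^(p^(t-s)) - (cval M v)^(p^(t-s)) := by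
        rw [← pow_mul, mul_comm, pow_mul]
      rw [hrw]
      have hexp : t + 1 - s = (t - s) + 1 := by omega
      rw [hexp]
      exact hkey
  have h2' : (p : ℤ)^(t+1) ∣ (∑ u : ZMod (p^t) → Fin n, (cval M u)^p)
      - ∑ u : ZMod (p^t) → Fin n, cval M u := by
    rw [← Finset.sum_sub_distrib]
    exact h2
  have : (∑ u : ZMod (p^t) → Fin n, cval M u)
      - ∑ w : ZMod (p^(t+1)) → Fin n, cval M w
      = -((∑ w : ZMod (p^(t+1)) → Fin n, cval M w)
        - ∑ u : ZMod (p^t) → Fin n, (cval M u)^p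
        + ((∑ u : ZMod (p^t) → Fin n, (cval M u)^p)
        - ∑ u : ZMod (p^t) → Fin n, cval M u)) := by ring
  rw [this]
  exact dvd_neg.mpr (dvd_add h1 h2')
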